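/- It is not necessary that the maxi.grounded semantics of a may-must argumentation be a subset of its maxi.complete semantics: there exists a may-must argumentation F whose unique maxi.grounded labelling is not a maximally proper labelling of F. -/
import Mathlib


inductive Lab : Type
  | inn | out | undec
deriving DecidableEq

structure MMA (A : Type) [Fintype A] [DecidableEq A] where
  R : A → A → Prop
  decR : DecidableRel R
  n1 : A → ℕ
  n2 : A → ℕ
  m1 : A → ℕ
  m2 : A → ℕ
  hn : ∀ a, n1 a ≤ n2 a
  hm : ∀ a, m1 a ≤ m2 a

variable {A : Type} [Fintype A] [DecidableEq A]

/-- Number of attackers of `a` labelled `out` by `lam`. -/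
def outCnt (F : MMA A) (lam : A → Lab) (a : A) : ℕ :=
  letI := F.decR
  (Finset.univ.filter (fun b => F.R b a ∧ lam b = Lab.out)).card

/-- Number of attackers of `a` labelled `in` by `lam`. -/
def inCnt (F : MMA A) (lam : A → Lab) (a : A) : ℕ :=
  letI := F.decR
  (Finset.univ.filter (fun b => F.R b a ∧ lam b = Lab.inn)).card

/-- `lam` designates label `l` for argument `a` in `F`. -/
def designates (F : MMA A) (lam : A → Lab) (a : A) : Lab → Prop
  | Lab.inn => F.n1 a ≤ outCnt F lam a ∧ inCnt F lam a < F.m2 a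
  | Lab.out => F.m1 a ≤ inCnt F lam a ∧ outCnt F lam a < F.n2 a
  | Lab.undec =>
      (F.n2 a ≤ outCnt F lam a ∧ F.m2 a ≤ inCnt F lam a) ∨
      (F.n1 a ≤ outCnt F lam a ∧ outCnt F lam a < F.n2 a) ∨
      (F.m1 a ≤ inCnt F lam a ∧ inCnt F lam a < F.m2 a) ∨
      (outCnt F lam a < F.n1 a ∧ inCnt F lam a < F.m1 a)

/-- `a`'s label is proper under `lam`. -/
def proper (F : MMA A) (lam : A → Lab) (a : A) : Prop :=
  designates F lam a (lam a)

/-- Exact labelling: every argument's label is proper. -/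
def exactLab (F : MMA A) (lam : A → Lab) : Prop :=
  ∀ a, proper F lam a

/-- Pre-maximally proper labelling. -/
def preMaxProper (F : MMA A) (lam : A → Lab) : Prop :=
  ∀ a, proper F lam a ∨ lam a = Lab.undec

/-- Maximally proper labelling. -/
def maxProper (F : MMA A) (lam : A → Lab) : Prop :=
  preMaxProper F lam ∧
    ∀ lam', preMaxProper F lam' → ∀ a, proper F lam' a → proper F lam a

/-- The order `⪯` on labellings. -/
def labLE (l1 l2 : A → Lab) : Prop :=
  ∀ a, (l1 a = Lab.inn → l2 a = Lab.inn) ∧ (l1 a = Lab.out → l2 a = Lab.out)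

/-- The maxi.grounded labelling: the meet of the maxi.complete labellings in `(Λ^A, ⪯)`. -/
def maxiGrounded (F : MMA A) (lam : A → Lab) : Prop :=
  (∀ lam' : A → Lab, maxProper F lam' → labLE lam lam') ∧
  (∀ mu : A → Lab, (∀ lam' : A → Lab, maxProper F lam' → labLE mu lam') → labLE mu lam)

instance : Fintype Lab :=
  ⟨{Lab.inn, Lab.out, Lab.undec}, by intro x; cases x <;> simp⟩

instance (F : MMA A) (lam : A → Lab) (a : A) (l : Lab) :
    Decidable (designates F lam a l) := by
  cases l <;> (unfold designates; exact inferInstance)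

instance (F : MMA A) (lam : A → Lab) (a : A) : Decidable (proper F lam a) := by
  unfold proper; infer_instance

instance (F : MMA A) (lam : A → Lab) : Decidable (exactLab F lam) := by
  unfold exactLab; infer_instance

instance (F : MMA A) (lam : A → Lab) : Decidable (preMaxProper F lam) := by
  unfold preMaxProper; infer_instance

instance (l1 l2 : A → Lab) : Decidable (labLE l1 l2) := by
  unfold labLE; infer_instance

instance (F : MMA A) (lam : A → Lab) : Decidable (maxProper F lam) := by
  unfold maxProper; infer_instance

lemma labLE_antisymm {l1 l2 : A → Lab} (h12 : labLE l1 l2) (h21 : labLE l2 l1) :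
    l1 = l2 := by
  funext a
  rcases h12 a with ⟨hi, ho⟩
  rcases h21 a with ⟨hi', ho'⟩
  cases h1 : l1 a <;> cases h2 : l2 a <;>
    first
      | rfl
      | (exact absurd (hi h1) (by rw [h2]; simp))
      | (exact absurd (ho h1) (by rw [h2]; simp))
      | (exact absurd (hi' h2) (by rw [h1]; simp))
      | (exact absurd (ho' h2) (by rw [h1]; simp))

def Fw : MMA (Fin 5) where
  R b a := (b.val, a.val) ∈ [(0,1),(1,2),(3,2),(4,3)]
  decR := fun _ _ => inferInstanceAs (Decidable (_ ∈ _))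
  n1 := ![0,0,1,1,0]
  n2 := ![0,1,1,1,0]
  m1 := ![1,1,1,1,1]
  m2 := ![1,2,1,1,1]
  hn := by decide
  hm := by decide

def lamG : Fin 5 → Lab := ![.inn, .undec, .undec, .out, .inn]
def L1 : Fin 5 → Lab := ![.inn, .inn, .undec, .out, .inn]
def L2 : Fin 5 → Lab := ![.inn, .out, .inn, .out, .inn]
def L3 : Fin 5 → Lab := ![.inn, .undec, .inn, .out, .inn]

lemma exact_L1 : exactLab Fw L1 := by decide
lemma exact_L2 : exactLab Fw L2 := by decide
lemma exact_L3 : exactLab Fw L3 := by decide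

lemma maxProper_of_exact {lam : Fin 5 → Lab} (h : exactLab Fw lam) :
    maxProper Fw lam :=
  ⟨fun a => Or.inl (h a), fun _ _ a _ => h a⟩

lemma exact_of_maxProper {lam : Fin 5 → Lab} (h : maxProper Fw lam) :
    exactLab Fw lam :=
  fun a => h.2 L2 (fun b => Or.inl (exact_L2 b)) a (exact_L2 a)

set_option maxRecDepth 10000 in
lemma exact_classify :
    ∀ lam : Fin 5 → Lab, exactLab Fw lam → lam = L1 ∨ lam = L2 ∨ lam = L3 := by
  decide

lemma ground_lb : ∀ nu : Fin 5 → Lab, maxProper Fw nu → labLE lamG nu := by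
  intro nu h
  rcases exact_classify nu (exact_of_maxProper h) with h1 | h1 | h1 <;> subst h1 <;> decide

set_option maxRecDepth 10000 in
lemma meet_ub : ∀ mu : Fin 5 → Lab, labLE mu L1 → labLE mu L2 → labLE mu lamG := by
  decide

theorem stmt8 :
    ∃ (n : ℕ) (F : MMA (Fin n)) (lam : Fin n → Lab),
      maxiGrounded F lam ∧
      (∀ lam' : Fin n → Lab, maxiGrounded F lam' → lam' = lam) ∧
      ¬ maxProper F lam := by
  refine ⟨5, Fw, lamG, ⟨?_, ?_⟩, ?_, ?_⟩
  · exact ground_lb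
  · intro mu h
    exact meet_ub mu (h L1 (maxProper_of_exact exact_L1)) (h L2 (maxProper_of_exact exact_L2))
  · intro lam' h
    have h1 : labLE lam' lamG :=
      meet_ub lam' (h.1 L1 (maxProper_of_exact exact_L1)) (h.1 L2 (maxProper_of_exact exact_L2))
    have h2 : labLE lamG lam' := h.2 lamG ground_lb
    exact labLE_antisymm h1 h2
  · intro h
    have := exact_of_maxProper h 2
    revert this
    decide
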